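/- The set S_n of semimagic n×n real matrices (all row and column sums equal nw for some w depending on the matrix) is closed under matrix multiplication; moreover, for V_n the weightless vertex-cross-sum matrices, V_n·V_n ⊆ S_n, V_n·S_n ⊆ V_n, and S_n·V_n ⊆ V_n. -/

import Mathlib

def IsSemimagic' {n : ℕ} (M : Matrix (Fin n) (Fin n) ℝ) : Prop :=
  ∃ w : ℝ, (∀ i, ∑ j, M i j = n * w) ∧ (∀ i, ∑ j, M j i = n * w)

def IsVertexCross0' {n : ℕ} (M : Matrix (Fin n) (Fin n) ℝ) : Prop :=
  (∀ i j k l : Fin n, M i j + M k l = M i l + M k j) ∧ ∑ i, ∑ j, M i j = 0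

theorem stmt_11 (n : ℕ) :
    (∀ M M' : Matrix (Fin n) (Fin n) ℝ, IsSemimagic' M → IsSemimagic' M' → IsSemimagic' (M * M')) ∧
    (∀ M M' : Matrix (Fin n) (Fin n) ℝ, IsVertexCross0' M → IsVertexCross0' M' → IsSemimagic' (M * M')) ∧
    (∀ M M' : Matrix (Fin n) (Fin n) ℝ, IsVertexCross0' M → IsSemimagic' M' → IsVertexCross0' (M * M')) ∧
    (∀ M M' : Matrix (Fin n) (Fin n) ℝ, IsSemimagic' M → IsVertexCross0' M' → IsVertexCross0' (M * M')) := by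
  have sum_row : ∀ (A B : Matrix (Fin n) (Fin n) ℝ) i,
      ∑ j, (A * B) i j = ∑ m, A i m * ∑ j, B m j := by
    intro A B i
    simp only [Matrix.mul_apply]
    rw [Finset.sum_comm]
    exact Finset.sum_congr rfl fun m _ => (Finset.mul_sum _ _ _).symm
  have sum_col : ∀ (A B : Matrix (Fin n) (Fin n) ℝ) j,
      ∑ i, (A * B) i j = ∑ m, (∑ i, A i m) * B m j := by
    intro A B j
    simp only [Matrix.mul_apply]
    rw [Finset.sum_comm]
    exact Finset.sum_congr rfl fun m _ => (Finset.sum_mul _ _ _).symm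
  refine ⟨?_, ?_, ?_, ?_⟩
  · rintro M M' ⟨w, hr, hc⟩ ⟨w', hr', hc'⟩
    refine ⟨n * w * w', fun i => ?_, fun i => ?_⟩
    · rw [sum_row, Finset.sum_congr rfl fun m _ => by rw [hr' m], ← Finset.sum_mul, hr i]
      ring
    · rw [sum_col, Finset.sum_congr rfl fun m _ => by rw [hc m], ← Finset.mul_sum, hc' i]
      ring
  · rintro M M' ⟨hx, hs⟩ ⟨hx', hs'⟩
    refine ⟨(∑ i, ∑ j, (M * M') i j) / (n * n), fun i => ?_, fun j => ?_⟩
    · have hn : (n : ℝ) ≠ 0 := Nat.cast_ne_zero.mpr (Fin.pos i).ne'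
      have hrow : ∀ i' k : Fin n, ∑ j, (M * M') i' j = ∑ j, (M * M') k j := by
        intro i' k
        rw [sum_row, sum_row]
        have h1 : ∑ m, (M i' m * ∑ j, M' m j - M k m * ∑ j, M' m j)
            = ∑ m, (M i' i - M k i) * ∑ j, M' m j := by
          refine Finset.sum_congr rfl fun m _ => ?_
          have hd := hx i' m k i
          linear_combination (∑ j, M' m j) * hd
        rw [Finset.sum_sub_distrib, ← Finset.mul_sum, hs', mul_zero, sub_eq_zero] at h1
        exact h1
      have hT : ∑ i', ∑ j, (M * M') i' j = n * ∑ j, (M * M') i j := by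
        rw [Finset.sum_congr rfl fun i' _ => hrow i' i, Finset.sum_const,
          Finset.card_univ, Fintype.card_fin, nsmul_eq_mul]
      rw [hT]
      field_simp
    · have hn : (n : ℝ) ≠ 0 := Nat.cast_ne_zero.mpr (Fin.pos j).ne'
      have hcol : ∀ j' l : Fin n, ∑ i, (M * M') i j' = ∑ i, (M * M') i l := by
        intro j' l
        rw [sum_col, sum_col]
        have h1 : ∑ m, ((∑ i, M i m) * M' m j' - (∑ i, M i m) * M' m l)
            = ∑ m, (∑ i, M i m) * (M' j j' - M' j l) := by
          refine Finset.sum_congr rfl fun m _ => ?_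
          have hd := hx' m j' j l
          linear_combination (∑ i, M i m) * hd
        rw [Finset.sum_sub_distrib, ← Finset.sum_mul, Finset.sum_comm, hs, zero_mul,
          sub_eq_zero] at h1
        exact h1
      have hT : ∑ i', ∑ j', (M * M') i' j' = n * ∑ i, (M * M') i j := by
        rw [show ∑ i', ∑ j', (M * M') i' j' = ∑ j', ∑ i', (M * M') i' j' from Finset.sum_comm,
          Finset.sum_congr rfl fun j' _ => hcol j' j, Finset.sum_const,
          Finset.card_univ, Fintype.card_fin, nsmul_eq_mul]
      rw [hT]
      field_simp
  · rintro M M' ⟨hx, hs⟩ ⟨w', hr', hc'⟩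
    constructor
    · intro i j k l
      simp only [Matrix.mul_apply]
      have h1 : ∑ m, (M i m * M' m j + M k m * M' m l - (M i m * M' m l + M k m * M' m j))
          = ∑ m, (M i i - M k i) * (M' m j - M' m l) := by
        refine Finset.sum_congr rfl fun m _ => ?_
        have hd := hx i m k i
        linear_combination (M' m j - M' m l) * hd
      have h2 : ∑ m, (M i i - M k i) * (M' m j - M' m l) = 0 := by
        rw [← Finset.mul_sum, Finset.sum_sub_distrib, hc' j, hc' l, sub_self, mul_zero]
      rw [h2] at h1
      simp only [Finset.sum_sub_distrib, Finset.sum_add_distrib] at h1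
      linarith
    · calc ∑ i, ∑ j, (M * M') i j = ∑ i, ∑ m, M i m * (n * w') := by
            refine Finset.sum_congr rfl fun i _ => ?_
            rw [sum_row]
            exact Finset.sum_congr rfl fun m _ => by rw [hr' m]
        _ = (∑ i, ∑ m, M i m) * (n * w') := by
            rw [Finset.sum_mul]
            exact Finset.sum_congr rfl fun i _ => (Finset.sum_mul _ _ _).symm
        _ = 0 := by rw [hs, zero_mul]
  · rintro M M' ⟨w, hr, hc⟩ ⟨hx', hs'⟩
    constructor
    · intro i j k l
      simp only [Matrix.mul_apply]
      have h1 : ∑ m, (M i m * M' m j + M k m * M' m l - (M i m * M' m l + M k m * M' m j))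
          = ∑ m, (M i m - M k m) * (M' j j - M' j l) := by
        refine Finset.sum_congr rfl fun m _ => ?_
        have hd := hx' m j j l
        linear_combination (M i m - M k m) * hd
      have h2 : ∑ m, (M i m - M k m) * (M' j j - M' j l) = 0 := by
        rw [← Finset.sum_mul, Finset.sum_sub_distrib, hr i, hr k, sub_self, zero_mul]
      rw [h2] at h1
      simp only [Finset.sum_sub_distrib, Finset.sum_add_distrib] at h1
      linarith
    · calc ∑ i, ∑ j, (M * M') i j = ∑ j, ∑ i, (M * M') i j := Finset.sum_comm
        _ = ∑ j, ∑ m, (n * w) * M' m j := by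
            refine Finset.sum_congr rfl fun j _ => ?_
            rw [sum_col]
            exact Finset.sum_congr rfl fun m _ => by rw [hc m]
        _ = (n * w) * ∑ m, ∑ j, M' m j := by
            rw [Finset.mul_sum, Finset.sum_comm]
            exact Finset.sum_congr rfl fun j _ => (Finset.mul_sum _ _ _).symm
        _ = 0 := by rw [hs', mul_zero]
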